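/- arXiv:1908.03616 — 2 statements merged into one kernel-verified Lean document; each statement's English description precedes it below -/
import Mathlib

section
/- Let N and N₁ be coprime positive integers. Then the representation of SL(2,ℤ) induced from the trivial representation of Γ₁(N·N₁) is isomorphic to the tensor product of the representations induced from the trivial representations of Γ₁(N) and Γ₁(N₁), i.e., Ind_{Γ₁(NN₁)}^{SL(2,ℤ)} 1 ≅ (Ind_{Γ₁(N)}^{SL(2,ℤ)} 1) ⊗ (Ind_{Γ₁(N₁)}^{SL(2,ℤ)} 1). -/
open scoped MatrixGroups TensorProduct

/-- The set of right cosets `Γ\SL(2,ℤ)`. -/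
def rcoset (Γ : Subgroup SL(2, ℤ)) := Quotient (QuotientGroup.rightRel Γ)

/-- Right multiplication of `SL(2, ℤ)` on the right cosets `Γ\SL(2,ℤ)`. -/
def rcosetMul (Γ : Subgroup SL(2, ℤ)) (g : SL(2, ℤ)) : rcoset Γ → rcoset Γ :=
  Quotient.map' (· * g) (by
    intro a b h
    rw [QuotientGroup.rightRel_apply] at h ⊢
    simpa [mul_assoc] using h)

/-- The representation of `SL(2, ℤ)` induced from the trivial one-dimensional
representation of a subgroup `Γ`, realized on the space of complex-valued functions
on the right cosets `Γ\SL(2,ℤ)`, with `SL(2, ℤ)` acting by right translation. -/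
def indTrivial (Γ : Subgroup SL(2, ℤ)) : Representation ℂ SL(2, ℤ) (rcoset Γ → ℂ) where
  toFun g :=
    { toFun := fun f => f ∘ rcosetMul Γ g
      map_add' := fun _ _ => rfl
      map_smul' := fun _ _ => rfl }
  map_one' := by
    apply LinearMap.ext; intro f; funext x
    induction x using Quotient.inductionOn' with
    | h a =>
      simp [rcosetMul, Quotient.map'_mk'']
      show f (Quotient.mk'' (a * 1)) = f (Quotient.mk'' a)
      rw [mul_one]
  map_mul' g h := by
    apply LinearMap.ext; intro f; funext x
    induction x using Quotient.inductionOn' with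
    | h a =>
      simp [rcosetMul, Quotient.map'_mk'', mul_assoc]
      show f (Quotient.mk'' (a * (g * h))) = f (Quotient.mk'' (a * g * h))
      rw [mul_assoc]

section Auxiliary

open CongruenceSubgroup

lemma exists_coprime_shift (c d M : ℤ) (hc : c ≠ 0)
    (h : ∀ p : ℕ, p.Prime → (p:ℤ) ∣ c → (p:ℤ) ∣ d → ¬ (p:ℤ) ∣ M) :
    ∃ t : ℤ, IsCoprime c (d + t * M) := by
  set S : Finset ℕ := c.natAbs.primeFactors.filter (fun p => ¬ (p:ℤ) ∣ d) with hS
  set t : ℤ := ((∏ p ∈ S, p : ℕ) : ℤ) with ht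
  refine ⟨t, ?_⟩
  rw [Int.isCoprime_iff_gcd_eq_one]
  by_contra hg
  obtain ⟨p, hp, hpd⟩ := Nat.exists_prime_and_dvd hg
  have hpP : Prime (p:ℤ) := Nat.prime_iff_prime_int.mp hp
  have hpc : (p:ℤ) ∣ c := dvd_trans (Int.natCast_dvd_natCast.mpr hpd) (Int.gcd_dvd_left _ _)
  have hpdt : (p:ℤ) ∣ d + t * M := dvd_trans (Int.natCast_dvd_natCast.mpr hpd) (Int.gcd_dvd_right _ _)
  by_cases hpd' : (p:ℤ) ∣ d
  · -- p ∣ d, so p ∤ M, so p ∣ t, contradiction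
    have hptM : (p:ℤ) ∣ t * M := by
      have := dvd_sub hpdt hpd'
      simpa using this
    have hpt : (p:ℤ) ∣ t := by
      rcases hpP.dvd_mul.mp hptM with h1 | h1
      · exact h1
      · exact absurd h1 (h p hp hpc hpd')
    have : p ∣ ∏ q ∈ S, q := Int.natCast_dvd_natCast.mp hpt
    obtain ⟨q, hqS, hpq⟩ := (Nat.Prime.prime hp).dvd_finset_prod_iff _ |>.mp this
    have hq : q.Prime := Nat.prime_of_mem_primeFactors (Finset.mem_filter.mp hqS).1
    have : p = q := ((Nat.prime_dvd_prime_iff_eq hp hq).mp hpq)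
    subst this
    exact (Finset.mem_filter.mp hqS).2 hpd'
  · -- p ∤ d: then p ∈ S, so p ∣ t, so p ∣ d, contradiction
    have hpS : p ∈ S := by
      refine Finset.mem_filter.mpr ⟨Nat.mem_primeFactors.mpr ⟨hp, ?_, Int.natAbs_ne_zero.mpr hc⟩, hpd'⟩
      exact Int.natCast_dvd_natCast.mp (Int.dvd_natAbs.mpr hpc)
    have hpt : (p:ℤ) ∣ t := Int.natCast_dvd_natCast.mpr (Finset.dvd_prod_of_mem _ hpS)
    have : (p:ℤ) ∣ d := by
      have := dvd_sub hpdt (hpt.mul_right M)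
      simpa using this
    exact hpd' this

lemma SL2_lift (M : ℕ) [NeZero M] (A : SL(2, ZMod M)) :
    ∃ B : SL(2, ℤ), ∀ i j, ((B i j : ℤ) : ZMod M) = A i j := by
  classical
  set a : ℤ := ((A 0 0).val : ℤ) with ha'
  set b : ℤ := ((A 0 1).val : ℤ) with hb'
  set c : ℤ := ((A 1 0).val : ℤ) with hc'
  set d : ℤ := ((A 1 1).val : ℤ) with hd'
  have ha : (a : ZMod M) = A 0 0 := by simp [ha', ZMod.natCast_val, ZMod.cast_id]
  have hb : (b : ZMod M) = A 0 1 := by simp [hb', ZMod.natCast_val, ZMod.cast_id]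
  have hc : (c : ZMod M) = A 1 0 := by simp [hc', ZMod.natCast_val, ZMod.cast_id]
  have hd : (d : ZMod M) = A 1 1 := by simp [hd', ZMod.natCast_val, ZMod.cast_id]
  have hdet : ((a * d - b * c : ℤ) : ZMod M) = 1 := by
    push_cast
    rw [ha, hb, hc, hd]
    have := A.2
    rw [Matrix.det_fin_two] at this
    exact_mod_cast this
  have hMdvd : (M:ℤ) ∣ (a * d - b * c - 1) := by
    rw [← ZMod.intCast_zmod_eq_zero_iff_dvd]
    have h2 : ((a*d - b*c : ℤ) : ZMod M) - 1 = 0 := by rw [hdet]; ring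
    push_cast at h2 ⊢
    linear_combination h2
  set c₀ : ℤ := if c = 0 then (M:ℤ) else c with hc₀'
  have hc₀M : ((c₀ : ZMod M)) = A 1 0 := by
    by_cases h0 : c = 0
    · simp [hc₀', h0, ← hc, ZMod.natCast_self]
    · simp [hc₀', h0, hc]
  have hc₀c : (M:ℤ) ∣ c₀ - c := by
    by_cases h0 : c = 0
    · simp [hc₀', h0]
    · simp [hc₀', h0]
  have hc₀0 : c₀ ≠ 0 := by
    rw [hc₀']
    split
    · exact_mod_cast NeZero.ne M
    · assumption
  -- no common prime of c₀, d, M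
  obtain ⟨t, hco⟩ := exists_coprime_shift c₀ d (M:ℤ) hc₀0 (by
    intro p hp h1 h2 h3
    have hpc : (p:ℤ) ∣ c := by
      have := dvd_sub h1 (h3.trans hc₀c)
      simpa using this
    have : (p:ℤ) ∣ 1 := by
      have h4 : (p:ℤ) ∣ a * d - b * c - 1 := h3.trans hMdvd
      have h5 : (p:ℤ) ∣ a * d - b * c := dvd_sub (Dvd.dvd.mul_left h2 a) (Dvd.dvd.mul_left hpc b)
      have := dvd_sub h5 h4
      simpa using this
    exact (Nat.prime_iff_prime_int.mp hp).not_dvd_one this)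
  set d₀ : ℤ := d + t * M with hd₀'
  have hd₀M : ((d₀ : ZMod M)) = A 1 1 := by
    rw [hd₀']
    push_cast
    simp [ZMod.natCast_self, hd]
  obtain ⟨u, v, huv⟩ := hco
  set x : ℤ := v with hx'
  set y : ℤ := -u with hy'
  have hxy : x * d₀ - y * c₀ = 1 := by rw [hx', hy']; linear_combination huv
  set w : ℤ := b * x - a * y with hw'
  refine ⟨⟨!![x + w * c₀, y + w * d₀; c₀, d₀], by
    rw [Matrix.det_fin_two_of]; linear_combination (d₀ + c₀) * 0 + hxy + w * c₀ * d₀ - w * d₀ * c₀⟩, ?_⟩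
  -- the congruence relations in ZMod M
  have h1 : (x : ZMod M) * (d₀ : ZMod M) - (y : ZMod M) * (c₀ : ZMod M) = 1 := by
    exact_mod_cast congrArg (fun z : ℤ => (z : ZMod M)) hxy
  have h2 : (a : ZMod M) * (d : ZMod M) - (b : ZMod M) * (c : ZMod M) = 1 := by
    have := hdet; push_cast at this; exact this
  have hcc : ((c₀ : ZMod M)) = (c : ZMod M) := by rw [hc₀M, hc]
  have hdd : ((d₀ : ZMod M)) = (d : ZMod M) := by rw [hd₀M, hd]
  rw [hcc, hdd] at h1
  intro i j
  fin_cases i <;> fin_cases j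
  · show ((x + w * c₀ : ℤ) : ZMod M) = A 0 0
    rw [← ha]; push_cast; rw [hcc, hw']; push_cast
    linear_combination (a:ZMod M) * h1 - (x:ZMod M) * h2
  · show ((y + w * d₀ : ℤ) : ZMod M) = A 0 1
    rw [← hb]; push_cast; rw [hdd, hw']; push_cast
    linear_combination (b:ZMod M) * h1 - (y:ZMod M) * h2
  · exact hc₀M
  · exact hd₀M

lemma SL2_crt_lift (N N₁ : ℕ) [NeZero N] [NeZero N₁] (hco : Nat.Coprime N N₁)
    (g h : SL(2, ℤ)) :
    ∃ k : SL(2, ℤ), (∀ i j, ((k i j : ℤ) : ZMod N) = ((g i j : ℤ) : ZMod N)) ∧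
      (∀ i j, ((k i j : ℤ) : ZMod N₁) = ((h i j : ℤ) : ZMod N₁)) := by
  haveI : NeZero (N * N₁) := ⟨Nat.mul_ne_zero (NeZero.ne N) (NeZero.ne N₁)⟩
  set e := ZMod.chineseRemainder hco with he
  set f₁ : ZMod (N * N₁) →+* ZMod N := (RingHom.fst (ZMod N) (ZMod N₁)).comp e.toRingHom with hf₁
  set f₂ : ZMod (N * N₁) →+* ZMod N₁ := (RingHom.snd (ZMod N) (ZMod N₁)).comp e.toRingHom with hf₂
  set W : Matrix (Fin 2) (Fin 2) (ZMod (N * N₁)) :=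
    Matrix.of fun i j => e.symm (((g i j : ℤ) : ZMod N), ((h i j : ℤ) : ZMod N₁)) with hW
  have hW1 : ∀ i j, f₁ (W i j) = ((g i j : ℤ) : ZMod N) := by
    intro i j; simp [hW, hf₁]
  have hW2 : ∀ i j, f₂ (W i j) = ((h i j : ℤ) : ZMod N₁) := by
    intro i j; simp [hW, hf₂]
  have hdetW : W.det = 1 := by
    apply e.injective
    rw [map_one]
    apply Prod.ext
    · show (RingHom.fst (ZMod N) (ZMod N₁)) (e W.det) = _
      rw [show (RingHom.fst (ZMod N) (ZMod N₁)) (e W.det) = f₁ W.det from rfl,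
        RingHom.map_det]
      have : f₁.mapMatrix W = (Int.castRingHom (ZMod N)).mapMatrix (g : Matrix (Fin 2) (Fin 2) ℤ) := by
        ext i j; simp [hW1 i j]
      rw [this, ← RingHom.map_det]
      simp [g.2]
    · show (RingHom.snd (ZMod N) (ZMod N₁)) (e W.det) = _
      rw [show (RingHom.snd (ZMod N) (ZMod N₁)) (e W.det) = f₂ W.det from rfl,
        RingHom.map_det]
      have : f₂.mapMatrix W = (Int.castRingHom (ZMod N₁)).mapMatrix (h : Matrix (Fin 2) (Fin 2) ℤ) := by
        ext i j; simp [hW2 i j]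
      rw [this, ← RingHom.map_det]
      simp [h.2]
  obtain ⟨k, hk⟩ := SL2_lift (N * N₁) ⟨W, hdetW⟩
  refine ⟨k, fun i j => ?_, fun i j => ?_⟩
  · have := congrArg f₁ (hk i j)
    rwa [map_intCast, hW1 i j] at this
  · have := congrArg f₂ (hk i j)
    rwa [map_intCast, hW2 i j] at this

lemma zmod_cast_one_of_dvd {n m : ℕ} [NeZero m] (hd : n ∣ m) {z : ℤ}
    (hz : (z : ZMod m) = 1) : (z : ZMod n) = 1 := by
  have := congrArg (ZMod.castHom hd (ZMod n)) hz
  rwa [map_intCast, map_one] at this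

lemma zmod_cast_zero_of_dvd {n m : ℕ} [NeZero m] (hd : n ∣ m) {z : ℤ}
    (hz : (z : ZMod m) = 0) : (z : ZMod n) = 0 := by
  have := congrArg (ZMod.castHom hd (ZMod n)) hz
  rwa [map_intCast, map_zero] at this

lemma Gamma1_mul_le_left (N N₁ : ℕ) [NeZero (N * N₁)] :
    Gamma1 (N * N₁) ≤ Gamma1 N := by
  intro A hA
  rw [Gamma1_mem] at hA ⊢
  exact ⟨zmod_cast_one_of_dvd (dvd_mul_right N N₁) hA.1,
    zmod_cast_one_of_dvd (dvd_mul_right N N₁) hA.2.1,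
    zmod_cast_zero_of_dvd (dvd_mul_right N N₁) hA.2.2⟩

lemma Gamma1_mul_le_right (N N₁ : ℕ) [NeZero (N * N₁)] :
    Gamma1 (N * N₁) ≤ Gamma1 N₁ := by
  intro A hA
  rw [Gamma1_mem] at hA ⊢
  exact ⟨zmod_cast_one_of_dvd (dvd_mul_left N₁ N) hA.1,
    zmod_cast_one_of_dvd (dvd_mul_left N₁ N) hA.2.1,
    zmod_cast_zero_of_dvd (dvd_mul_left N₁ N) hA.2.2⟩

lemma zmod_cast_mul_one (N N₁ : ℕ) (hco : Nat.Coprime N N₁) {z : ℤ}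
    (h1 : (z : ZMod N) = 1) (h2 : (z : ZMod N₁) = 1) : (z : ZMod (N * N₁)) = 1 := by
  have hico : IsCoprime (N : ℤ) (N₁ : ℤ) := Int.isCoprime_iff_gcd_eq_one.mpr (by exact_mod_cast hco)
  have d1 : (N : ℤ) ∣ z - 1 := by
    rw [← ZMod.intCast_zmod_eq_zero_iff_dvd]; push_cast; rw [h1]; ring
  have d2 : (N₁ : ℤ) ∣ z - 1 := by
    rw [← ZMod.intCast_zmod_eq_zero_iff_dvd]; push_cast; rw [h2]; ring
  have : ((N * N₁ : ℕ) : ℤ) ∣ z - 1 := by push_cast; exact hico.mul_dvd d1 d2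
  rw [← ZMod.intCast_zmod_eq_zero_iff_dvd] at this
  push_cast at this
  linear_combination this

lemma zmod_cast_mul_zero (N N₁ : ℕ) (hco : Nat.Coprime N N₁) {z : ℤ}
    (h1 : (z : ZMod N) = 0) (h2 : (z : ZMod N₁) = 0) : (z : ZMod (N * N₁)) = 0 := by
  have hico : IsCoprime (N : ℤ) (N₁ : ℤ) := Int.isCoprime_iff_gcd_eq_one.mpr (by exact_mod_cast hco)
  have d1 : (N : ℤ) ∣ z := by rwa [← ZMod.intCast_zmod_eq_zero_iff_dvd]
  have d2 : (N₁ : ℤ) ∣ z := by rwa [← ZMod.intCast_zmod_eq_zero_iff_dvd]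
  have : ((N * N₁ : ℕ) : ℤ) ∣ z := by push_cast; exact hico.mul_dvd d1 d2
  rwa [ZMod.intCast_zmod_eq_zero_iff_dvd]

lemma mem_Gamma1_mul (N N₁ : ℕ) (hco : Nat.Coprime N N₁) {A : SL(2, ℤ)}
    (h1 : A ∈ Gamma1 N) (h2 : A ∈ Gamma1 N₁) : A ∈ Gamma1 (N * N₁) := by
  rw [Gamma1_mem] at h1 h2 ⊢
  exact ⟨zmod_cast_mul_one N N₁ hco h1.1 h2.1,
    zmod_cast_mul_one N N₁ hco h1.2.1 h2.2.1,
    zmod_cast_mul_zero N N₁ hco h1.2.2 h2.2.2⟩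

lemma congr_mem_Gamma1 (n : ℕ) (g k : SL(2, ℤ))
    (h : ∀ i j, ((k i j : ℤ) : ZMod n) = ((g i j : ℤ) : ZMod n)) :
    g * k⁻¹ ∈ Gamma1 n := by
  set φ := @Matrix.SpecialLinearGroup.map (Fin 2) _ _ _ _ _ _ (Int.castRingHom (ZMod n)) with hφ
  have hgk : φ g = φ k := by
    ext i j
    exact (h i j).symm
  have hker : g * k⁻¹ ∈ Gamma n := by
    rw [Gamma_mem']
    rw [map_mul, map_inv, hgk, mul_inv_cancel]
  rw [Gamma_mem] at hker
  rw [Gamma1_mem]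
  exact ⟨hker.1, hker.2.2.2, hker.2.2.1⟩

/-- projection to cosets of a larger group -/
def rcosetProj {Γ Δ : Subgroup SL(2, ℤ)} (h : Γ ≤ Δ) : rcoset Γ → rcoset Δ :=
  Quotient.map' id (by
    intro a b hab
    rw [QuotientGroup.rightRel_apply] at hab ⊢
    exact h hab)

lemma rcosetProj_mul {Γ Δ : Subgroup SL(2, ℤ)} (h : Γ ≤ Δ) (g : SL(2, ℤ)) (x : rcoset Γ) :
    rcosetProj h (rcosetMul Γ g x) = rcosetMul Δ g (rcosetProj h x) := by
  induction x using Quotient.inductionOn' with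
  | h a => rfl

lemma Gamma_le_Gamma1 (n : ℕ) : Gamma n ≤ Gamma1 n := by
  intro A hA
  rw [Gamma_mem] at hA
  rw [Gamma1_mem]
  exact ⟨hA.1, hA.2.2.2, hA.2.2.1⟩

lemma finite_rcoset_Gamma1 (n : ℕ) [NeZero n] : Finite (rcoset (Gamma1 n)) := by
  set φ := @Matrix.SpecialLinearGroup.map (Fin 2) _ _ _ _ _ _ (Int.castRingHom (ZMod n)) with hφ
  have hwd : ∀ a b : SL(2, ℤ), QuotientGroup.rightRel (Gamma n) a b → φ a = φ b := by
    intro a b hab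
    rw [QuotientGroup.rightRel_apply] at hab
    have : φ (b * a⁻¹) = 1 := Gamma_mem'.mp hab
    rw [map_mul, map_inv] at this
    have := congrArg (· * φ a) this
    simpa [mul_assoc] using this.symm
  have hfin : Finite (rcoset (Gamma n)) := by
    apply Finite.of_injective (fun x : rcoset (Gamma n) => Quotient.liftOn' x φ hwd)
    intro x y
    induction x using Quotient.inductionOn' with
    | h a =>
    induction y using Quotient.inductionOn' with
    | h b =>
    intro hab
    simp only [Quotient.liftOn'_mk''] at hab
    apply Quotient.sound'
    rw [QuotientGroup.rightRel_apply]
    rw [Gamma_mem', map_mul, map_inv, hab, mul_inv_cancel]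
  apply Finite.of_surjective (rcosetProj (Gamma_le_Gamma1 n))
  intro y
  induction y using Quotient.inductionOn' with
  | h a => exact ⟨Quotient.mk'' a, rfl⟩

lemma rcosetMul_left_inv (Γ : Subgroup SL(2, ℤ)) (g : SL(2, ℤ)) (x : rcoset Γ) :
    rcosetMul Γ g⁻¹ (rcosetMul Γ g x) = x := by
  induction x using Quotient.inductionOn' with
  | h a => show Quotient.mk'' (a * g * g⁻¹) = Quotient.mk'' a; rw [mul_assoc, mul_inv_cancel, mul_one]

lemma rcosetMul_eq_iff (Γ : Subgroup SL(2, ℤ)) (g : SL(2, ℤ)) (x y : rcoset Γ) :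
    rcosetMul Γ g y = x ↔ y = rcosetMul Γ g⁻¹ x := by
  constructor
  · rintro rfl; rw [rcosetMul_left_inv]
  · rintro rfl
    have := rcosetMul_left_inv Γ g⁻¹ x
    rwa [inv_inv] at this

/-- action of a representation on a delta function -/
lemma indTrivial_single (Γ : Subgroup SL(2, ℤ)) (g : SL(2, ℤ)) (x : rcoset Γ)
    [DecidableEq (rcoset Γ)] :
    (indTrivial Γ) g (Pi.single x (1:ℂ)) = Pi.single (rcosetMul Γ g⁻¹ x) (1:ℂ) := by
  have happ : (indTrivial Γ) g (Pi.single x (1:ℂ)) = Pi.single x (1:ℂ) ∘ rcosetMul Γ g := rfl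
  funext y
  rw [happ]
  simp only [Function.comp_apply, Pi.single_apply, rcosetMul_eq_iff]

end Auxiliary

open CongruenceSubgroup

/-- For coprime positive integers `N` and `N₁`,
`Ind_{Γ₁(N·N₁)}^{SL(2,ℤ)} 𝟙 ≅ (Ind_{Γ₁(N)}^{SL(2,ℤ)} 𝟙) ⊗ (Ind_{Γ₁(N₁)}^{SL(2,ℤ)} 𝟙)`
as representations of `SL(2, ℤ)`. -/
theorem indTrivial_mul_iso_tprod (N N₁ : ℕ) (hN : 0 < N) (hN₁ : 0 < N₁)
    (hco : Nat.Coprime N N₁) :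
    ∃ e : (rcoset (CongruenceSubgroup.Gamma1 (N * N₁)) → ℂ) ≃ₗ[ℂ]
        (rcoset (CongruenceSubgroup.Gamma1 N) → ℂ) ⊗[ℂ]
          (rcoset (CongruenceSubgroup.Gamma1 N₁) → ℂ),
      ∀ (g : SL(2, ℤ)) (v : rcoset (CongruenceSubgroup.Gamma1 (N * N₁)) → ℂ),
        e ((indTrivial (CongruenceSubgroup.Gamma1 (N * N₁))) g v) =
          ((indTrivial (CongruenceSubgroup.Gamma1 N)).tprod
            (indTrivial (CongruenceSubgroup.Gamma1 N₁))) g (e v) := by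
  classical
  haveI i1 : NeZero N := ⟨hN.ne'⟩
  haveI i2 : NeZero N₁ := ⟨hN₁.ne'⟩
  haveI i3 : NeZero (N * N₁) := ⟨(Nat.mul_pos hN hN₁).ne'⟩
  have le1 : Gamma1 (N * N₁) ≤ Gamma1 N := Gamma1_mul_le_left N N₁
  have le2 : Gamma1 (N * N₁) ≤ Gamma1 N₁ := Gamma1_mul_le_right N N₁
  set σf : rcoset (Gamma1 (N * N₁)) → rcoset (Gamma1 N) × rcoset (Gamma1 N₁) :=
    fun x => (rcosetProj le1 x, rcosetProj le2 x) with hσf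
  have hinj : Function.Injective σf := by
    intro x y
    induction x using Quotient.inductionOn' with
    | h a =>
    induction y using Quotient.inductionOn' with
    | h b =>
    intro hab
    have hA := congrArg Prod.fst hab
    have hB := congrArg Prod.snd hab
    simp only [hσf] at hA hB
    have hA' : b * a⁻¹ ∈ Gamma1 N := by
      have := Quotient.exact' hA
      rwa [QuotientGroup.rightRel_apply] at this
    have hB' : b * a⁻¹ ∈ Gamma1 N₁ := by
      have := Quotient.exact' hB
      rwa [QuotientGroup.rightRel_apply] at this
    apply Quotient.sound'
    rw [QuotientGroup.rightRel_apply]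
    exact mem_Gamma1_mul N N₁ hco hA' hB'
  have hsurj : Function.Surjective σf := by
    rintro ⟨x, y⟩
    induction x using Quotient.inductionOn' with
    | h g =>
    induction y using Quotient.inductionOn' with
    | h h =>
    obtain ⟨k, hk1, hk2⟩ := SL2_crt_lift N N₁ hco g h
    refine ⟨Quotient.mk'' k, ?_⟩
    have e1 : rcosetProj le1 (Quotient.mk'' k) = Quotient.mk'' g := by
      apply Quotient.sound'
      rw [QuotientGroup.rightRel_apply]
      exact congr_mem_Gamma1 N g k hk1
    have e2 : rcosetProj le2 (Quotient.mk'' k) = Quotient.mk'' h := by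
      apply Quotient.sound'
      rw [QuotientGroup.rightRel_apply]
      exact congr_mem_Gamma1 N₁ h k hk2
    simp only [hσf, e1, e2]
  set σ : rcoset (Gamma1 (N * N₁)) ≃ rcoset (Gamma1 N) × rcoset (Gamma1 N₁) :=
    Equiv.ofBijective σf ⟨hinj, hsurj⟩ with hσdef
  have hσ : ∀ (g : SL(2, ℤ)) (x : rcoset (Gamma1 (N * N₁))),
      σ (rcosetMul (Gamma1 (N * N₁)) g x)
        = (rcosetMul (Gamma1 N) g (σ x).1, rcosetMul (Gamma1 N₁) g (σ x).2) := by
    intro g x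
    show σf _ = _
    exact Prod.ext (rcosetProj_mul le1 g x) (rcosetProj_mul le2 g x)
  haveI : Finite (rcoset (Gamma1 N)) := finite_rcoset_Gamma1 N
  haveI : Finite (rcoset (Gamma1 N₁)) := finite_rcoset_Gamma1 N₁
  haveI : Finite (rcoset (Gamma1 (N * N₁))) := finite_rcoset_Gamma1 (N * N₁)
  haveI : Fintype (rcoset (Gamma1 N)) := Fintype.ofFinite _
  haveI : Fintype (rcoset (Gamma1 N₁)) := Fintype.ofFinite _
  haveI : Fintype (rcoset (Gamma1 (N * N₁))) := Fintype.ofFinite _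
  set bA := Pi.basisFun ℂ (rcoset (Gamma1 N)) with hbA
  set bB := Pi.basisFun ℂ (rcoset (Gamma1 N₁)) with hbB
  set bP := Pi.basisFun ℂ (rcoset (Gamma1 N) × rcoset (Gamma1 N₁)) with hbP
  set bC := Pi.basisFun ℂ (rcoset (Gamma1 (N * N₁))) with hbC
  have hsingleA : ∀ a, bA a = Pi.single a (1:ℂ) := by
    intro a; funext j; simp [hbA, Pi.basisFun_apply, Pi.single]
  have hsingleB : ∀ a, bB a = Pi.single a (1:ℂ) := by
    intro a; funext j; simp [hbB, Pi.basisFun_apply, Pi.single]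
  have hsingleP : ∀ a, bP a = Pi.single a (1:ℂ) := by
    intro a; funext j; simp [hbP, Pi.basisFun_apply, Pi.single]
  have hsingleC : ∀ a, bC a = Pi.single a (1:ℂ) := by
    intro a; funext j; simp [hbC, Pi.basisFun_apply, Pi.single]
  set L₁ : (rcoset (Gamma1 (N * N₁)) → ℂ) ≃ₗ[ℂ] (rcoset (Gamma1 N) × rcoset (Gamma1 N₁) → ℂ) :=
    LinearEquiv.funCongrLeft ℂ ℂ σ.symm with hL₁def
  set L₂ : (rcoset (Gamma1 N) × rcoset (Gamma1 N₁) → ℂ) ≃ₗ[ℂ]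
      (rcoset (Gamma1 N) → ℂ) ⊗[ℂ] (rcoset (Gamma1 N₁) → ℂ) :=
    bP.equiv (bA.tensorProduct bB) (Equiv.refl _) with hL₂def
  have hL₁ : ∀ x, L₁ (Pi.single x (1:ℂ)) = Pi.single (σ x) (1:ℂ) := by
    intro x
    have happ : L₁ (Pi.single x (1:ℂ)) = Pi.single x (1:ℂ) ∘ σ.symm := rfl
    funext p
    rw [happ]
    simp only [Function.comp_apply, Pi.single_apply, Equiv.symm_apply_eq]
  have hL₂ : ∀ (a : rcoset (Gamma1 N)) (b : rcoset (Gamma1 N₁)),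
      L₂ (Pi.single ((a, b) : rcoset (Gamma1 N) × rcoset (Gamma1 N₁)) (1:ℂ))
        = Pi.single a (1:ℂ) ⊗ₜ[ℂ] Pi.single b (1:ℂ) := by
    intro a b
    rw [← hsingleP (a, b), hL₂def, Module.Basis.equiv_apply, Equiv.refl_apply,
      Module.Basis.tensorProduct_apply, hsingleA, hsingleB]
  refine ⟨L₁ ≪≫ₗ L₂, ?_⟩
  have key : ∀ g : SL(2, ℤ), (L₁ ≪≫ₗ L₂).toLinearMap ∘ₗ ((indTrivial (Gamma1 (N * N₁))) g)
      = (((indTrivial (Gamma1 N)).tprod (indTrivial (Gamma1 N₁))) g)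
          ∘ₗ (L₁ ≪≫ₗ L₂).toLinearMap := by
    intro g
    apply bC.ext
    intro x
    simp only [LinearMap.comp_apply, LinearEquiv.coe_coe, LinearEquiv.trans_apply]
    rw [hsingleC, indTrivial_single, hL₁, hσ, hL₂, hL₁, ← Prod.mk.eta (p := σ x), hL₂,
      Representation.tprod_apply, TensorProduct.map_tmul, indTrivial_single, indTrivial_single]
  intro g v
  simpa using LinearMap.congr_fun (key g) v
end

section
/- Let k ≥ 3 and let N, M be positive integers. For any integers c', d' and any matrix [[α,β],[0,δ]] with α,β,δ nonnegative integers, αδ = M, the weight-k slash action of [[α,β],[0,δ]] on the level-N Eisenstein series G_{k,N,c',d'}(τ) = Σ_{(c,d)≡(c',d') mod N, (c,d)≠(0,0)} (cτ+d)^{-k} is a finite linear combination of level-MN Eisenstein series G_{k,MN,c'',d''}(τ), where the sum ranges over residues c'' ≡ αc' (mod αN) and d'' ≡ δd' + βc' (mod gcd(β,δ)N) taken modulo MN. -/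
open Complex

/-- The level-`N` Eisenstein series of weight `k` attached to the residue pair `(c', d')`
mod `N`: the sum over nonzero integer pairs `(c, d)` congruent to `(c', d')` mod `N` of
`(c z + d)^{-k}` (viewed as a function of a complex variable; for `3 ≤ k` the series
converges absolutely when `z` lies in the upper half-plane). -/
noncomputable def eisG (k N : ℕ) (c' d' : ℤ) (z : ℂ) : ℂ :=
  ∑' p : {p : ℤ × ℤ // p ≠ 0 ∧ p.1 ≡ c' [ZMOD (N : ℤ)] ∧ p.2 ≡ d' [ZMOD (N : ℤ)]},
    ((p.1.1 : ℂ) * z + (p.1.2 : ℂ)) ^ (-(k : ℤ))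

/-- For `k ≥ 3` and positive integers `N, M`, the weight-`k` slash action
of an upper-triangular matrix `[[α, β], [0, δ]]` (with `α, β, δ` nonnegative integers and
`αδ = M`) on the level-`N` Eisenstein series `G_{k,N,c',d'}` is a finite linear combination
of level-`MN` Eisenstein series `G_{k,MN,c'',d''}`, where the pairs `(c'', d'')` satisfy
`c'' ≡ α c' (mod α N)` and `d'' ≡ δ d' + β c' (mod gcd(β, δ) N)`. -/
theorem slash_eisG_is_combination_of_level_MN (k N M : ℕ) (hk : 3 ≤ k) (hN : 0 < N)
    (hM : 0 < M) (c' d' : ℤ) (α β δ : ℕ) (hαδ : α * δ = M) :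
    ∃ (S : Finset (ℤ × ℤ)) (a : ℤ × ℤ → ℂ),
      (∀ p ∈ S, p.1 ≡ (α : ℤ) * c' [ZMOD ((α : ℤ) * N)] ∧
        p.2 ≡ (δ : ℤ) * d' + (β : ℤ) * c' [ZMOD ((Nat.gcd β δ : ℤ) * N)]) ∧
      ∀ τ : UpperHalfPlane,
        ((δ : ℂ)) ^ (-(k : ℤ)) * eisG k N c' d' (((α : ℂ) * (τ : ℂ) + (β : ℂ)) / (δ : ℂ)) =
          ∑ p ∈ S, a p * eisG k (M * N) p.1 p.2 (τ : ℂ) := by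
  classical
  have hMδ : 0 < α * δ := hαδ ▸ hM
  have hα : 0 < α := by
    rcases Nat.eq_zero_or_pos α with h | h
    · subst h; simp at hMδ
    · exact h
  have hδ : 0 < δ := by
    rcases Nat.eq_zero_or_pos δ with h | h
    · subst h; simp at hMδ
    · exact h
  have hαZ : ((α : ℤ)) ≠ 0 := by exact_mod_cast hα.ne'
  have hδZ : ((δ : ℤ)) ≠ 0 := by exact_mod_cast hδ.ne'
  have hδC : ((δ : ℂ)) ≠ 0 := by exact_mod_cast hδ.ne'
  set mn : ℤ := ((M * N : ℕ) : ℤ) with hmn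
  have hmnval : mn = (α : ℤ) * δ * N := by rw [hmn]; push_cast [← hαδ]; ring
  have hmn0 : 0 < mn := by rw [hmnval]; positivity
  -- the predicate describing the image lattice
  set P : ℤ × ℤ → Prop := fun q => ∃ c d : ℤ, c ≡ c' [ZMOD (N : ℤ)] ∧ d ≡ d' [ZMOD (N : ℤ)] ∧
    q = (c * α, c * β + d * δ) with hPdef
  -- invariance of P under congruence mod MN
  have hPinv : ∀ p q : ℤ × ℤ, P p → q.1 ≡ p.1 [ZMOD mn] → q.2 ≡ p.2 [ZMOD mn] → P q := by
    rintro p q ⟨c, d, hc, hd, rfl⟩ h1 h2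
    simp only at h1 h2
    obtain ⟨s, hs⟩ := Int.modEq_iff_dvd.mp h1
    obtain ⟨t, ht⟩ := Int.modEq_iff_dvd.mp h2
    rw [hmnval] at hs ht
    refine ⟨c - δ * N * s, d - ((α : ℤ) * N * t - N * s * β), ?_, ?_, ?_⟩
    · simpa using hc.sub (Int.modEq_zero_iff_dvd.mpr ⟨(δ : ℤ) * s, by ring⟩)
    · simpa using hd.sub (Int.modEq_zero_iff_dvd.mpr ⟨(α : ℤ) * t - s * β, by ring⟩)
    · refine Prod.ext_iff.mpr ⟨?_, ?_⟩ <;> simp only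
      · linear_combination -hs
      · linear_combination -ht
  -- the finite set of residues
  set S : Finset (ℤ × ℤ) :=
    (Finset.Ico (0 : ℤ) mn ×ˢ Finset.Ico (0 : ℤ) mn).filter P with hSdef
  have hmemS : ∀ p, p ∈ S ↔ (0 ≤ p.1 ∧ p.1 < mn) ∧ (0 ≤ p.2 ∧ p.2 < mn) ∧ P p := by
    intro p
    simp [hSdef, Finset.mem_filter, Finset.mem_product, and_assoc]
  refine ⟨S, fun _ => 1, ?_, ?_⟩
  · -- congruence conditions on members of S
    rintro p hp
    obtain ⟨-, -, c, d, hc, hd, rfl⟩ := (hmemS p).mp hp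
    obtain ⟨t, ht⟩ := Int.modEq_iff_dvd.mp hc
    obtain ⟨s, hs⟩ := Int.modEq_iff_dvd.mp hd
    constructor
    · exact Int.modEq_iff_dvd.mpr ⟨t, by linear_combination (α : ℤ) * ht⟩
    · refine Int.modEq_iff_dvd.mpr ?_
      obtain ⟨b1, hb1⟩ : ((Nat.gcd β δ : ℤ)) ∣ (β : ℤ) :=
        Int.natCast_dvd_natCast.mpr (Nat.gcd_dvd_left _ _)
      obtain ⟨d1, hd1⟩ : ((Nat.gcd β δ : ℤ)) ∣ (δ : ℤ) :=
        Int.natCast_dvd_natCast.mpr (Nat.gcd_dvd_right _ _)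
      exact ⟨b1 * t + d1 * s, by
        linear_combination (β : ℤ) * ht + (δ : ℤ) * hs + (N : ℤ) * t * hb1 + (N : ℤ) * s * hd1⟩
  · -- the main identity
    intro τ
    -- notation
    set g : ℤ × ℤ → ℂ := fun q => ((q.1 : ℂ) * (τ : ℂ) + (q.2 : ℂ)) ^ (-(k : ℤ)) with hgdef
    have hsum : Summable g := by
      have h1 := (EisensteinSeries.summable_norm_eisSummand (k := (k : ℤ))
        (by exact_mod_cast hk) τ).of_norm
      have h2 := ((finTwoArrowEquiv ℤ).symm.summable_iff
        (f := fun v => EisensteinSeries.eisSummand k v τ)).mpr h1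
      refine h2.congr fun q => ?_
      simp [EisensteinSeries.eisSummand, finTwoArrowEquiv, UpperHalfPlane.coe, hgdef]
    set φ : ℤ × ℤ → ℤ × ℤ := fun p => (p.1 * α, p.1 * β + p.2 * δ) with hφdef
    have hφinj : Function.Injective φ := by
      rintro p q h
      rw [Prod.ext_iff] at h ⊢
      obtain ⟨h1, h2⟩ := h
      simp only [hφdef] at h1 h2
      have e1 : p.1 = q.1 := by
        have := mul_right_cancel₀ hαZ h1; exact this
      refine ⟨e1, ?_⟩
      rw [e1] at h2
      have : p.2 * δ = q.2 * δ := by linarith [h2]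
      exact mul_right_cancel₀ hδZ this
    set A : Set (ℤ × ℤ) :=
      {p | p ≠ 0 ∧ p.1 ≡ c' [ZMOD (N : ℤ)] ∧ p.2 ≡ d' [ZMOD (N : ℤ)]} with hAdef
    set E : Set (ℤ × ℤ) := {q | q ≠ 0 ∧ P q} with hEdef
    have himg : φ '' A = E := by
      ext q
      constructor
      · rintro ⟨p, ⟨hp0, hpc, hpd⟩, rfl⟩
        refine ⟨?_, p.1, p.2, hpc, hpd, rfl⟩
        intro h
        rw [Prod.ext_iff] at h
        obtain ⟨h1, h2⟩ := h
        simp only [hφdef] at h1 h2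
        apply hp0
        have e1 : p.1 = 0 := by
          rcases mul_eq_zero.mp h1 with h | h
          · exact h
          · exact absurd h hαZ
        have e2 : p.2 = 0 := by
          rw [e1, zero_mul, zero_add] at h2
          rcases mul_eq_zero.mp h2 with h | h
          · exact h
          · exact absurd h hδZ
        exact Prod.ext e1 e2
      · rintro ⟨hq0, c, d, hc, hd, rfl⟩
        refine ⟨(c, d), ⟨?_, hc, hd⟩, rfl⟩
        intro h
        rw [Prod.mk_eq_zero] at h
        obtain ⟨rfl, rfl⟩ := h
        exact hq0 (by simp)
    -- classes
    set B : ℤ × ℤ → Set (ℤ × ℤ) := fun p =>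
      {q | q ≠ 0 ∧ q.1 ≡ p.1 [ZMOD mn] ∧ q.2 ≡ p.2 [ZMOD mn]} with hBdef
    -- the pointwise partition identity
    have hpart : ∀ q, E.indicator g q = ∑ p ∈ S, (B p).indicator g q := by
      intro q
      by_cases hq : q ∈ E
      · obtain ⟨hq0, hPq⟩ := hq
        set p₀ : ℤ × ℤ := (q.1 % mn, q.2 % mn) with hp₀
        have hq1 : q.1 ≡ p₀.1 [ZMOD mn] := (Int.emod_emod_of_dvd q.1 dvd_rfl).symm
        have hq2 : q.2 ≡ p₀.2 [ZMOD mn] := (Int.emod_emod_of_dvd q.2 dvd_rfl).symm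
        have hp₀S : p₀ ∈ S := by
          refine (hmemS p₀).mpr ⟨⟨Int.emod_nonneg _ hmn0.ne', Int.emod_lt_of_pos _ hmn0⟩,
            ⟨Int.emod_nonneg _ hmn0.ne', Int.emod_lt_of_pos _ hmn0⟩, ?_⟩
          exact hPinv q p₀ hPq hq1.symm hq2.symm
        rw [Set.indicator_of_mem (show q ∈ E from ⟨hq0, hPq⟩) g]
        have hterm : ∀ p ∈ S, (B p).indicator g q = if p = p₀ then g q else 0 := by
          intro p hp
          by_cases hpe : p = p₀
          · subst hpe
            rw [if_pos rfl]
            exact Set.indicator_of_mem (show q ∈ B p₀ from ⟨hq0, hq1, hq2⟩) g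
          · rw [if_neg hpe]
            refine Set.indicator_of_notMem ?_ g
            rintro ⟨-, h1, h2⟩
            obtain ⟨⟨hb1, hb2⟩, ⟨hb3, hb4⟩, -⟩ := (hmemS p).mp hp
            apply hpe
            have e1 : p.1 = q.1 % mn := by
              have := h1.symm
              rw [Int.ModEq] at this
              rw [Int.emod_eq_of_lt hb1 hb2] at this
              exact this
            have e2 : p.2 = q.2 % mn := by
              have := h2.symm
              rw [Int.ModEq] at this
              rw [Int.emod_eq_of_lt hb3 hb4] at this
              exact this
            exact Prod.ext e1 e2
        rw [Finset.sum_congr rfl hterm, Finset.sum_ite_eq' S p₀ (fun _ => g q), if_pos hp₀S]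
      · rw [Set.indicator_of_notMem hq g]
        refine (Finset.sum_eq_zero ?_).symm
        intro p hp
        refine Set.indicator_of_notMem ?_ g
        rintro ⟨hq0, h1, h2⟩
        obtain ⟨-, -, hPp⟩ := (hmemS p).mp hp
        exact hq ⟨hq0, hPinv p q hPp h1 h2⟩
    -- now the computation
    have step1 : eisG k N c' d' (((α : ℂ) * (τ : ℂ) + (β : ℂ)) / (δ : ℂ)) =
        (∑' p : A, g (φ p)) * (δ : ℂ) ^ (k : ℤ) := by
      rw [eisG, ← tsum_mul_right]
      apply tsum_congr
      rintro ⟨p, hp⟩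
      have hz : ((p.1 : ℂ) * (((α : ℂ) * (τ : ℂ) + (β : ℂ)) / (δ : ℂ)) + (p.2 : ℂ))
          = (((p.1 * α : ℤ) : ℂ) * (τ : ℂ) + ((p.1 * β + p.2 * δ : ℤ) : ℂ)) / (δ : ℂ) := by
        push_cast
        field_simp
        ring
      rw [hz, div_zpow, zpow_neg ((δ : ℂ)) (k : ℤ), div_eq_mul_inv, inv_inv]
    have step2 : (∑' p : A, g (φ p)) = ∑' q : E, g q := by
      rw [← tsum_image g (Set.injOn_of_injective hφinj), himg]
    have step3 : (∑' q : E, g q) = ∑ p ∈ S, ∑' q, (B p).indicator g q := by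
      rw [tsum_subtype E g, tsum_congr hpart, Summable.tsum_finsetSum]
      intro p _
      exact hsum.indicator _
    have step4 : ∀ p : ℤ × ℤ, (∑' q, (B p).indicator g q) = eisG k (M * N) p.1 p.2 (τ : ℂ) := by
      intro p
      rw [eisG, ← tsum_subtype (B p) g]
      rfl
    rw [step1, mul_comm, mul_assoc, ← zpow_add₀ hδC]
    simp only [add_neg_cancel, zpow_zero, mul_one]
    rw [step2, step3]
    exact Finset.sum_congr rfl fun p _ => by rw [step4 p]; simp
end
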